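/- In the linear-Gaussian multi-cause model, for any scaling factor c ≠ 0, the reparameterization α₁ = cα, σ²_{U,1} = σ²_U/c², β₁ = β + Σ_AA^{-1} α · γσ²_U(1 − 1/c), γ₁ = γ, σ²_{A,1} = σ²_A, with σ²_{Y,1} chosen so that the Y-variance equation holds, induces the same observable covariance matrix (Σ_AA, Σ_AY, Σ_YY) of (A, Y) as the original parameters, provided σ²_{Y,1} > 0. -/

import Mathlib

open Matrix

/-- Observable covariance of the causes: `Σ_AA = σ²_U ααᵀ + diag(σ²_A)`. -/
def SigmaAA {m : ℕ} (σU2 : ℝ) (α σA2 : Fin m → ℝ) : Matrix (Fin m) (Fin m) ℝ :=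
  σU2 • Matrix.vecMulVec α α + Matrix.diagonal σA2

/-- Observable cause–outcome covariance: `Σ_AY = Σ_AA β + γσ²_U α`. -/
def SigmaAY {m : ℕ} (σU2 : ℝ) (α σA2 β : Fin m → ℝ) (γ : ℝ) : Fin m → ℝ :=
  SigmaAA σU2 α σA2 *ᵥ β + (γ * σU2) • α

/-- Observable outcome variance:
`Σ_YY = (βᵀα + γ)²σ²_U + βᵀ diag(σ²_A) β + σ²_Y`. -/
def SigmaYY {m : ℕ} (σU2 : ℝ) (α σA2 β : Fin m → ℝ) (γ σY2 : ℝ) : ℝ :=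
  (β ⬝ᵥ α + γ) ^ 2 * σU2 + β ⬝ᵥ (Matrix.diagonal σA2 *ᵥ β) + σY2

/-- The shifted coefficient vector `β₁(c) = β + Σ_AA⁻¹ α · γσ²_U(1 − 1/c)`. -/
noncomputable def beta1 {m : ℕ} (σU2 : ℝ) (α σA2 β : Fin m → ℝ) (γ c : ℝ) : Fin m → ℝ :=
  β + (γ * σU2 * (1 - 1 / c)) • ((SigmaAA σU2 α σA2)⁻¹ *ᵥ α)

/-- The adjusted outcome-noise variance `σ²_{Y,1}`, chosen so that the
`Y`-variance equation holds. -/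
noncomputable def sigmaY21 {m : ℕ} (σU2 : ℝ) (α σA2 β : Fin m → ℝ) (γ σY2 c : ℝ) : ℝ :=
  SigmaYY σU2 α σA2 β γ σY2
    - ((beta1 σU2 α σA2 β γ c ⬝ᵥ (c • α) + γ) ^ 2 * (σU2 / c ^ 2)
        + beta1 σU2 α σA2 β γ c ⬝ᵥ (Matrix.diagonal σA2 *ᵥ beta1 σU2 α σA2 β γ c))

/-- In the linear-Gaussian multi-cause model, for any scaling factor `c ≠ 0`,
the reparameterization `α₁ = cα`, `σ²_{U,1} = σ²_U/c²`, `β₁`, `γ₁ = γ`,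
`σ²_{A,1} = σ²_A`, with `σ²_{Y,1}` chosen to satisfy the `Y`-variance equation,
induces the same observable covariance matrix of `(A, Y)`, provided
`σ²_{Y,1} > 0`. -/
theorem reparameterization_same_observable_covariance
    {m : ℕ} (α β σA2 : Fin m → ℝ) (γ σU2 σY2 c : ℝ) (hc : c ≠ 0)
    (hdet : IsUnit (SigmaAA σU2 α σA2).det)
    (hpos : 0 < sigmaY21 σU2 α σA2 β γ σY2 c) :
    SigmaAA (σU2 / c ^ 2) (c • α) σA2 = SigmaAA σU2 α σA2 ∧
    SigmaAY (σU2 / c ^ 2) (c • α) σA2 (beta1 σU2 α σA2 β γ c) γ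
      = SigmaAY σU2 α σA2 β γ ∧
    SigmaYY (σU2 / c ^ 2) (c • α) σA2 (beta1 σU2 α σA2 β γ c) γ
        (sigmaY21 σU2 α σA2 β γ σY2 c)
      = SigmaYY σU2 α σA2 β γ σY2 := by
  have hAA : SigmaAA (σU2 / c ^ 2) (c • α) σA2 = SigmaAA σU2 α σA2 := by
    unfold SigmaAA
    congr 1
    ext i j
    simp [Matrix.vecMulVec_apply]
    field_simp
  have hinv : SigmaAA σU2 α σA2 *ᵥ ((SigmaAA σU2 α σA2)⁻¹ *ᵥ α) = α := by
    rw [Matrix.mulVec_mulVec, Matrix.mul_nonsing_inv _ hdet, Matrix.one_mulVec]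
  refine ⟨hAA, ?_, ?_⟩
  · unfold SigmaAY beta1
    rw [hAA, Matrix.mulVec_add, Matrix.mulVec_smul, hinv]
    ext i
    simp
    field_simp
    ring
  · unfold sigmaY21
    unfold SigmaYY
    ring
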